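/- Let p be an odd prime, a a quadratic non-residue mod p, f(x) = x_1² − a x_2² − p x_3² + a p x_4², and let φ : Q_p⁴ → C be a Bruhat–Schwartz function. For Re(α) > 0, the integral ∫_{Q_p⁴} (φ(x) − φ(0)) |f(x)|_p^{−α−2} d⁴x converges absolutely. -/

import Mathlib

open MeasureTheory Complex Classical Filter

variable (p : ℕ) [Fact p.Prime]

noncomputable instance : MeasurableSpace ℚ_[p] := borel _
instance : BorelSpace ℚ_[p] := ⟨rfl⟩
noncomputable instance (n : ℕ) : MeasurableSpace (Fin n → ℚ_[p]) := borel _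
instance (n : ℕ) : BorelSpace (Fin n → ℚ_[p]) := ⟨rfl⟩

/-- Haar measure on `ℚ_p` normalized so that `ℤ_p` (the closed unit ball) has measure 1. -/
noncomputable def haarQ : Measure ℚ_[p] :=
  Measure.addHaarMeasure ⟨⟨Metric.closedBall 0 1, isCompact_closedBall 0 1⟩,
    ⟨0, mem_interior_iff_mem_nhds.2 (Metric.closedBall_mem_nhds 0 one_pos)⟩⟩

/-- Haar measure on `ℚ_p^n` normalized so that `ℤ_p^n` has measure 1. -/
noncomputable def haarQn (n : ℕ) : Measure (Fin n → ℚ_[p]) :=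
  Measure.addHaarMeasure ⟨⟨Metric.closedBall 0 1, isCompact_closedBall 0 1⟩,
    ⟨0, mem_interior_iff_mem_nhds.2 (Metric.closedBall_mem_nhds 0 one_pos)⟩⟩

/-- The p-adic fractional part of `x` : the unique rational of the form `z / p^n`
lying in `[0,1)` with `x - r ∈ ℤ_p`. -/
noncomputable def padicFract (x : ℚ_[p]) : ℚ :=
  if h : ∃ r : ℚ, (∃ (z : ℤ) (n : ℕ), r = (z : ℚ) / (p : ℚ) ^ n) ∧ 0 ≤ r ∧ r < 1 ∧
      ‖x - (r : ℚ_[p])‖ ≤ 1 then h.choose else 0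

/-- The standard additive character `χ(y) = exp(2 π i {y}_p)` of `ℚ_p`. -/
noncomputable def stdChar (y : ℚ_[p]) : ℂ :=
  Complex.exp (2 * Real.pi * Complex.I * (padicFract p y : ℂ))

/-- A Bruhat–Schwartz (test) function: locally constant with compact support. -/
def IsBruhatSchwartz {E : Type*} [TopologicalSpace E] (φ : E → ℂ) : Prop :=
  IsLocallyConstant φ ∧ HasCompactSupport φ

/-- Fourier transform on `ℚ_p`. -/
noncomputable def fourier1 (φ : ℚ_[p] → ℂ) (ξ : ℚ_[p]) : ℂ :=
  ∫ x, stdChar p (-(ξ * x)) * φ x ∂haarQ p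

/-- Fourier transform on `ℚ_p^n`. -/
noncomputable def fourierN (n : ℕ) (φ : (Fin n → ℚ_[p]) → ℂ) (ξ : Fin n → ℚ_[p]) : ℂ :=
  ∫ x, stdChar p (-(∑ i, ξ i * x i)) * φ x ∂haarQn p n

/-- Inverse Fourier transform on `ℚ_p^n`. -/
noncomputable def fourierInvN (n : ℕ) (φ : (Fin n → ℚ_[p]) → ℂ) (x : Fin n → ℚ_[p]) : ℂ :=
  ∫ ξ, stdChar p (∑ i, x i * ξ i) * φ ξ ∂haarQn p n

/-- The elliptic quadratic form `f(x) = x₁² - a x₂² - p x₃² + a p x₄²`. -/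
noncomputable def Qf (a : ℤ) (x : Fin 4 → ℚ_[p]) : ℚ_[p] :=
  x 0 ^ 2 - (a : ℚ_[p]) * x 1 ^ 2 - (p : ℚ_[p]) * x 2 ^ 2 + (a : ℚ_[p]) * (p : ℚ_[p]) * x 3 ^ 2

/-- The dual elliptic quadratic form `f°(x) = a p x₁² - p x₂² - a x₃² + x₄²`. -/
noncomputable def QfCirc (a : ℤ) (x : Fin 4 → ℚ_[p]) : ℚ_[p] :=
  (a : ℚ_[p]) * (p : ℚ_[p]) * x 0 ^ 2 - (p : ℚ_[p]) * x 1 ^ 2 - (a : ℚ_[p]) * x 2 ^ 2 + x 3 ^ 2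

instance : (haarQn p 4).IsAddHaarMeasure := by unfold haarQn; infer_instance

section AuxiliaryLemmas

open scoped ENNReal NNReal

namespace PadicAux

lemma toZMod_zero_iff {p : ℕ} [Fact p.Prime] (z : ℤ_[p]) :
    PadicInt.toZMod z = 0 ↔ (p:ℤ_[p]) ∣ z := by
  rw [← RingHom.mem_ker, PadicInt.ker_toZMod, PadicInt.maximalIdeal_eq_span_p,
    Ideal.mem_span_singleton]

lemma dvd_pair {p : ℕ} [Fact p.Prime] (a : ℤ) (ha : legendreSym p a = -1)
    (u v : ℤ_[p]) (h : (p:ℤ_[p]) ∣ u ^ 2 - a * v ^ 2) :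
    (p:ℤ_[p]) ∣ u ∧ (p:ℤ_[p]) ∣ v := by
  rw [← toZMod_zero_iff] at h ⊢
  rw [← toZMod_zero_iff (p := p) v]
  have h2 : (PadicInt.toZMod u) ^ 2 - (a : ZMod p) * (PadicInt.toZMod v) ^ 2 = 0 := by
    simpa using h
  exact legendreSym.eq_zero_mod_of_eq_neg_one ha h2

lemma norm_le_inv_of_dvd {p : ℕ} [Fact p.Prime] (z : ℤ_[p]) (h : (p:ℤ_[p]) ∣ z) :
    ‖z‖ ≤ (p:ℝ)⁻¹ := by
  obtain ⟨w, rfl⟩ := h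
  calc ‖(p:ℤ_[p]) * w‖ = (p:ℝ)⁻¹ * ‖w‖ := by rw [norm_mul, PadicInt.norm_p]
  _ ≤ (p:ℝ)⁻¹ * 1 := mul_le_mul_of_nonneg_left w.norm_le_one (by positivity)
  _ = (p:ℝ)⁻¹ := mul_one _

lemma int_bound {p : ℕ} [Fact p.Prime] (a : ℤ) (ha : legendreSym p a = -1)
    (y : Fin 4 → ℤ_[p]) (hmax : ∃ i, ‖y i‖ = 1) :
    (p:ℝ)⁻¹ ≤ ‖y 0 ^ 2 - a * y 1 ^ 2 - p * y 2 ^ 2 + a * p * y 3 ^ 2‖ := by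
  set F := y 0 ^ 2 - (a:ℤ_[p]) * y 1 ^ 2 - (p:ℤ_[p]) * y 2 ^ 2 + (a:ℤ_[p]) * (p:ℤ_[p]) * y 3 ^ 2 with hF
  by_contra hcon
  push_neg at hcon
  have hp1 : (1:ℝ) < p := by exact_mod_cast (Fact.out : p.Prime).one_lt
  have h2 : ‖F‖ ≤ (p:ℝ) ^ (-2 : ℤ) := by
    rw [PadicInt.norm_le_pow_iff_norm_lt_pow_add_one]
    have h21 : (-2 + 1 : ℤ) = -1 := by norm_num
    rw [h21, zpow_neg_one]
    exact hcon
  have hdvd2 : (p:ℤ_[p])^2 ∣ F := by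
    rw [← Ideal.mem_span_singleton, ← PadicInt.norm_le_pow_iff_mem_span_pow]
    exact_mod_cast h2
  have hdvd1 : (p:ℤ_[p]) ∣ F := dvd_trans (dvd_pow_self _ two_ne_zero) hdvd2
  have hp0 : (p:ℤ_[p]) ≠ 0 := Nat.cast_ne_zero.mpr (Fact.out : p.Prime).ne_zero
  have e1 : y 0 ^ 2 - (a:ℤ_[p]) * y 1 ^ 2 = F + p * (y 2 ^ 2 - a * y 3 ^ 2) := by rw [hF]; ring
  have d01 : (p:ℤ_[p]) ∣ y 0 ^ 2 - (a:ℤ_[p]) * y 1 ^ 2 := by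
    rw [e1]; exact dvd_add hdvd1 (Dvd.intro _ rfl)
  obtain ⟨d0, d1⟩ := dvd_pair a ha _ _ d01
  have e2 : (p:ℤ_[p]) * (y 2 ^ 2 - a * y 3 ^ 2) = (y 0 ^ 2 - (a:ℤ_[p]) * y 1 ^ 2) - F := by
    rw [hF]; ring
  have d23' : (p:ℤ_[p])^2 ∣ (p:ℤ_[p]) * (y 2 ^ 2 - a * y 3 ^ 2) := by
    rw [e2]
    exact dvd_sub (dvd_sub (pow_dvd_pow_of_dvd d0 2)
      (Dvd.dvd.mul_left (pow_dvd_pow_of_dvd d1 2) _)) hdvd2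
  have d23 : (p:ℤ_[p]) ∣ y 2 ^ 2 - (a:ℤ_[p]) * y 3 ^ 2 := by
    rw [pow_two] at d23'
    exact (mul_dvd_mul_iff_left hp0).mp d23'
  obtain ⟨d2, d3⟩ := dvd_pair a ha _ _ d23
  obtain ⟨i, hi⟩ := hmax
  have hle : ‖y i‖ ≤ (p:ℝ)⁻¹ := by
    fin_cases i <;> [exact norm_le_inv_of_dvd _ d0; exact norm_le_inv_of_dvd _ d1;
      exact norm_le_inv_of_dvd _ d2; exact norm_le_inv_of_dvd _ d3]
  rw [hi] at hle
  have : (p:ℝ)⁻¹ < 1 := inv_lt_one_of_one_lt₀ hp1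
  linarith

lemma sphere_bound {p : ℕ} [Fact p.Prime] (a : ℤ) (ha : legendreSym p a = -1)
    (x : Fin 4 → ℚ_[p]) (h1 : ∀ i, ‖x i‖ ≤ 1) (h2 : ∃ i, ‖x i‖ = 1) :
    (p:ℝ)⁻¹ ≤ ‖Qf p a x‖ := by
  set y : Fin 4 → ℤ_[p] := fun i => ⟨x i, h1 i⟩ with hy
  have hnorm : ‖Qf p a x‖ = ‖(y 0 ^ 2 - (a:ℤ_[p]) * y 1 ^ 2 - (p:ℤ_[p]) * y 2 ^ 2
      + (a:ℤ_[p]) * (p:ℤ_[p]) * y 3 ^ 2 : ℤ_[p])‖ := by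
    have key : Qf p a x = ((y 0 ^ 2 - a * y 1 ^ 2 - p * y 2 ^ 2 + a * p * y 3 ^ 2 : ℤ_[p]) : ℚ_[p]) := by
      push_cast
      rfl
    rw [key]; rfl
  rw [hnorm]
  exact int_bound a ha y (by obtain ⟨i, hi⟩ := h2; exact ⟨i, hi⟩)

lemma exists_norm_eq' {p : ℕ} [Fact p.Prime] (x : Fin 4 → ℚ_[p]) : ∃ i, ‖x i‖ = ‖x‖ := by
  obtain ⟨i, _, hi⟩ := Finset.exists_mem_eq_sup Finset.univ
    (⟨0, Finset.mem_univ 0⟩ : (Finset.univ : Finset (Fin 4)).Nonempty) (fun i => ‖x i‖₊)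
  exact ⟨i, by rw [Pi.norm_def, hi]; rfl⟩

lemma Qf_lower {p : ℕ} [Fact p.Prime] (a : ℤ) (ha : legendreSym p a = -1)
    (x : Fin 4 → ℚ_[p]) (hx : x ≠ 0) : ‖x‖ ^ 2 / p ≤ ‖Qf p a x‖ := by
  have hppos : (0:ℝ) < p := by exact_mod_cast (Fact.out : p.Prime).pos
  have hpne : (p:ℝ) ≠ 0 := ne_of_gt hppos
  obtain ⟨i₀, hi₀⟩ := exists_norm_eq' x
  have hxn : ‖x‖ ≠ 0 := norm_ne_zero_iff.mpr hx
  have hx0 : x i₀ ≠ 0 := by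
    intro h; rw [h, norm_zero] at hi₀; exact hxn hi₀.symm
  set v := (x i₀).valuation with hv
  have hnormx : ‖x‖ = (p:ℝ) ^ (-v) := by rw [← hi₀, Padic.norm_eq_zpow_neg_valuation hx0]
  set c : ℚ_[p] := (p:ℚ_[p]) ^ (-v) with hcdef
  have hc : ‖c‖ = (p:ℝ) ^ v := by
    rw [hcdef, Padic.norm_p_zpow]; ring_nf
  set u : Fin 4 → ℚ_[p] := fun i => c * x i with hu
  have hu1 : ∀ i, ‖u i‖ ≤ 1 := by
    intro i
    rw [hu, norm_mul, hc]
    calc (p:ℝ) ^ v * ‖x i‖ ≤ (p:ℝ) ^ v * (p:ℝ) ^ (-v) := by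
          gcongr
          rw [← hnormx]; exact norm_le_pi_norm x i
    _ = 1 := by rw [← zpow_add₀ hpne]; simp
  have hu2 : ‖u i₀‖ = 1 := by
    rw [hu, norm_mul, hc, hi₀, hnormx, ← zpow_add₀ hpne]; simp
  have hQu : Qf p a u = c ^ 2 * Qf p a x := by
    simp only [Qf, hu]; ring
  have hb := sphere_bound a ha u hu1 ⟨i₀, hu2⟩
  rw [hQu, norm_mul, norm_pow, hc] at hb
  have h2v : ((p:ℝ) ^ v) ^ 2 = (p:ℝ) ^ (2 * v) := by
    rw [← zpow_natCast (((p:ℝ))^v) 2, ← zpow_mul]; ring_nf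
  rw [h2v] at hb
  calc ‖x‖ ^ 2 / p = (p:ℝ) ^ (-(2*v)) * (p:ℝ)⁻¹ := by
        rw [hnormx, div_eq_mul_inv, ← zpow_natCast ((p:ℝ)^(-v)) 2, ← zpow_mul]; ring_nf
  _ ≤ (p:ℝ) ^ (-(2*v)) * ((p:ℝ) ^ (2*v) * ‖Qf p a x‖) := by
        exact mul_le_mul_of_nonneg_left hb (by positivity)
  _ = ‖Qf p a x‖ := by rw [← mul_assoc, ← zpow_add₀ hpne]; simp

open MeasureTheory in
lemma measure_ball_step {p : ℕ} [Fact p.Prime] (k : ℤ) :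
    haarQn p 4 (Metric.closedBall 0 ((p:ℝ)^(k+1))) ≤
      (p:ℝ≥0∞)^4 * haarQn p 4 (Metric.closedBall 0 ((p:ℝ)^k)) := by
  have hppos : (0:ℝ) < p := by exact_mod_cast (Fact.out : p.Prime).pos
  have hpne : (p:ℝ) ≠ 0 := ne_of_gt hppos
  have hpq : (p:ℚ_[p]) ≠ 0 := by exact_mod_cast Nat.cast_ne_zero.mpr (Fact.out : p.Prime).ne_zero
  set μ := haarQn p 4
  set c : (Fin 4 → ZMod p) → (Fin 4 → ℚ_[p]) :=
    fun v i => ((ZMod.cast (v i) : ℤ_[p]) : ℚ_[p]) * (p:ℚ_[p])^(-(k+1)) with hc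
  have cover : Metric.closedBall (0 : Fin 4 → ℚ_[p]) ((p:ℝ)^(k+1)) ⊆
      ⋃ v : Fin 4 → ZMod p, (fun y => -(c v) + y) ⁻¹' Metric.closedBall 0 ((p:ℝ)^k) := by
    intro x hx
    rw [Metric.mem_closedBall, dist_zero_right] at hx
    have hxi : ∀ i, ‖(p:ℚ_[p])^(k+1) * x i‖ ≤ 1 := by
      intro i
      rw [norm_mul, Padic.norm_p_zpow]
      calc (p:ℝ)^(-(k+1)) * ‖x i‖ ≤ (p:ℝ)^(-(k+1)) * (p:ℝ)^(k+1) := by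
            gcongr
            exact le_trans (norm_le_pi_norm x i) hx
      _ = 1 := by rw [← zpow_add₀ hpne, neg_add_cancel, zpow_zero]
    set W : Fin 4 → ℤ_[p] := fun i => ⟨(p:ℚ_[p])^(k+1) * x i, hxi i⟩ with hW
    refine Set.mem_iUnion.2 ⟨fun i => PadicInt.toZMod (W i), ?_⟩
    simp only [Set.mem_preimage, Metric.mem_closedBall, dist_zero_right]
    have key : ∀ i, ‖(-(c (fun i => PadicInt.toZMod (W i))) + x) i‖ ≤ (p:ℝ)^k := by
      intro i
      have hdiff : (W i : ℚ_[p]) - ((ZMod.cast (PadicInt.toZMod (W i)) : ℤ_[p]) : ℚ_[p])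
          = ((W i - (ZMod.cast (PadicInt.toZMod (W i)) : ℤ_[p]) : ℤ_[p]) : ℚ_[p]) := by
        push_cast; ring
      have hmem : ‖(W i - (ZMod.cast (PadicInt.toZMod (W i)) : ℤ_[p]) : ℤ_[p])‖ ≤ (p:ℝ)⁻¹ := by
        apply norm_le_inv_of_dvd
        have := PadicInt.toZMod_spec (W i)
        rwa [PadicInt.maximalIdeal_eq_span_p, Ideal.mem_span_singleton] at this
      have heq : (-(c (fun i => PadicInt.toZMod (W i))) + x) i
          = (p:ℚ_[p])^(-(k+1)) * ((W i : ℚ_[p])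
            - ((ZMod.cast (PadicInt.toZMod (W i)) : ℤ_[p]) : ℚ_[p])) := by
        simp only [Pi.add_apply, Pi.neg_apply, hc]
        have h1 : (p:ℚ_[p])^(-(k+1)) * (p:ℚ_[p])^(k+1) = 1 := by
          rw [← zpow_add₀ hpq, neg_add_cancel, zpow_zero]
        rw [mul_sub, ← mul_assoc, h1, one_mul]
        ring
      rw [heq, norm_mul, Padic.norm_p_zpow, hdiff]
      calc (p:ℝ)^(-(-(k+1)))
            * ‖((W i - (ZMod.cast (PadicInt.toZMod (W i)) : ℤ_[p]) : ℤ_[p]) : ℚ_[p])‖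
          ≤ (p:ℝ)^(k+1) * (p:ℝ)⁻¹ := by
            rw [neg_neg]
            gcongr
            exact hmem
      _ = (p:ℝ)^k := by rw [← zpow_neg_one, ← zpow_add₀ hpne]; ring_nf
    exact (pi_norm_le_iff_of_nonneg (by positivity)).2 key
  refine le_trans (measure_mono cover) (le_trans (measure_iUnion_le _) ?_)
  have heq : ∀ v : Fin 4 → ZMod p,
      μ ((fun y => -(c v) + y) ⁻¹' Metric.closedBall 0 ((p:ℝ)^k))
        = μ (Metric.closedBall 0 ((p:ℝ)^k)) := fun v => measure_preimage_add μ _ _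
  rw [tsum_congr heq, tsum_fintype, Finset.sum_const, Finset.card_univ, nsmul_eq_mul]
  gcongr
  rw [Fintype.card_fun]
  simp [ZMod.card]

open MeasureTheory in
lemma measure_ball_le {p : ℕ} [Fact p.Prime] (k₀ : ℤ) (n : ℕ) :
    haarQn p 4 (Metric.closedBall 0 ((p:ℝ)^(k₀ + n))) ≤
      (p:ℝ≥0∞)^(4*n) * haarQn p 4 (Metric.closedBall 0 ((p:ℝ)^k₀)) := by
  induction n with
  | zero => simp
  | succ n ih =>
      have h1 : (k₀ + (n+1:ℕ) : ℤ) = (k₀ + n) + 1 := by push_cast; ring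
      rw [h1]
      calc haarQn p 4 (Metric.closedBall 0 ((p:ℝ)^((k₀ + n : ℤ)+1)))
          ≤ (p:ℝ≥0∞)^4 * haarQn p 4 (Metric.closedBall 0 ((p:ℝ)^(k₀ + n : ℤ))) :=
            measure_ball_step _
      _ ≤ (p:ℝ≥0∞)^4 * ((p:ℝ≥0∞)^(4*n) * haarQn p 4 (Metric.closedBall 0 ((p:ℝ)^k₀))) := by
            gcongr
      _ = (p:ℝ≥0∞)^(4*(n+1)) * haarQn p 4 (Metric.closedBall 0 ((p:ℝ)^k₀)) := by
            rw [← mul_assoc, ← pow_add]; ring_nf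

end PadicAux

end AuxiliaryLemmas


open scoped ENNReal NNReal in
/-- For a Bruhat–Schwartz function `φ` and `Re α > 0`, the integral
`∫ (φ(x) - φ(0)) |f(x)|_p^{-α-2} d⁴x` converges absolutely. -/
theorem regularized_integral_convergent (p : ℕ) [Fact p.Prime] (hp : p ≠ 2)
    (a : ℤ) (ha : legendreSym p a = -1)
    (φ : (Fin 4 → ℚ_[p]) → ℂ) (hφ : IsBruhatSchwartz φ)
    (α : ℂ) (hα : 0 < α.re) :
    Integrable (fun x : Fin 4 → ℚ_[p] => (φ x - φ 0) * ((‖Qf p a x‖ : ℂ) ^ (-α - 2)))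
      (haarQn p 4) := by
  classical
  obtain ⟨hlc, hcs⟩ := hφ
  have hp1 : (1:ℝ) < p := by exact_mod_cast (Fact.out : p.Prime).one_lt
  have hppos : (0:ℝ) < p := lt_trans one_pos hp1
  have hpne : (p:ℝ) ≠ 0 := ne_of_gt hppos
  have hφc : Continuous φ := hlc.continuous
  have hQc : Continuous (Qf p a) := by
    unfold Qf; fun_prop
  set g := fun x : Fin 4 → ℚ_[p] => (φ x - φ 0) * ((‖Qf p a x‖ : ℂ) ^ (-α - 2)) with hg
  have hmeas : AEStronglyMeasurable g (haarQn p 4) := by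
    apply Measurable.aestronglyMeasurable
    exact ((hφc.sub continuous_const).measurable).mul
      (((Complex.continuous_ofReal.comp hQc.norm).measurable).pow measurable_const)
  refine ⟨hmeas, ?_⟩
  obtain ⟨C₀, hC₀⟩ := (hφc.norm).bounded_above_of_compact_support hcs.norm
  set C := max C₀ 0 with hCdef
  have hCnn : 0 ≤ C := le_max_right _ _
  have hCb : ∀ x, ‖φ x‖ ≤ C := fun x => le_trans (by simpa using hC₀ x) (le_max_left _ _)
  set σ := α.re + 2 with hσdef
  have hσ : 2 < σ := by rw [hσdef]; linarith
  -- local constancy radius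
  have hopen : IsOpen (φ ⁻¹' {φ 0}) := hlc {φ 0}
  obtain ⟨ε, hε, hball⟩ := Metric.isOpen_iff.1 hopen 0 rfl
  have hinv1 : (p:ℝ)⁻¹ < 1 := inv_lt_one_of_one_lt₀ hp1
  obtain ⟨n₀, hn₀⟩ := exists_pow_lt_of_lt_one hε hinv1
  set k₀ : ℤ := -(n₀:ℤ) with hk₀def
  have hpk : (p:ℝ)^k₀ = ((p:ℝ)⁻¹)^n₀ := by
    rw [hk₀def, zpow_neg, zpow_natCast, inv_pow]
  have hsmall : ∀ x : Fin 4 → ℚ_[p], ‖x‖ ≤ (p:ℝ)^k₀ → φ x = φ 0 := by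
    intro x hx
    refine hball ?_
    rw [Metric.mem_ball, dist_zero_right]
    calc ‖x‖ ≤ (p:ℝ)^k₀ := hx
    _ = ((p:ℝ)⁻¹)^n₀ := hpk
    _ < ε := hn₀
  set B : ℤ → Set (Fin 4 → ℚ_[p]) := fun k => Metric.closedBall 0 ((p:ℝ)^k) with hB
  set M := haarQn p 4 (B k₀) with hMdef
  have hMfin : M < ⊤ := (isCompact_closedBall _ _).measure_lt_top
  set e : ℕ → ℤ := fun n => 2*(k₀+n) - 1 with he
  set b1 : ℕ → ℝ := fun n => (2*C) * ((p:ℝ)^(e n))^(-σ) with hb1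
  have hb1nn : ∀ n, 0 ≤ b1 n := by
    intro n; rw [hb1]
    have := Real.rpow_nonneg (le_of_lt (zpow_pos hppos (e n))) (-σ)
    positivity
  -- pointwise bound on annuli
  have hbound : ∀ n : ℕ, ∀ x, x ∈ B (k₀+n+1) \ B (k₀+n) → ‖g x‖ ≤ b1 n := by
    intro n x hx
    obtain ⟨_, hx2⟩ := hx
    have hxgt : (p:ℝ)^(k₀+n:ℤ) < ‖x‖ := by
      by_contra h
      push_neg at h
      exact hx2 (Metric.mem_closedBall.2 (by rwa [dist_zero_right]))
    have hxne : x ≠ 0 := by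
      intro h
      rw [h, norm_zero] at hxgt
      exact absurd hxgt (not_lt.2 (le_of_lt (zpow_pos hppos _)))
    have hQlow : (p:ℝ)^(e n) ≤ ‖Qf p a x‖ := by
      calc (p:ℝ)^(e n) = ((p:ℝ)^(k₀+n:ℤ))^2 / p := by
            rw [he, div_eq_mul_inv, ← zpow_natCast ((p:ℝ)^(k₀+n:ℤ)) 2, ← zpow_mul,
              ← zpow_neg_one, ← zpow_add₀ hpne]
            congr 1
            push_cast
            ring
      _ ≤ ‖x‖^2 / p := by gcongr
      _ ≤ ‖Qf p a x‖ := PadicAux.Qf_lower a ha x hxne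
    have hQpos : (0:ℝ) < ‖Qf p a x‖ := lt_of_lt_of_le (zpow_pos hppos _) hQlow
    have hre : (-α - 2).re = -σ := by
      rw [hσdef]; simp [Complex.sub_re, Complex.neg_re]; ring
    have hnormg : ‖g x‖ = ‖φ x - φ 0‖ * ‖Qf p a x‖ ^ (-σ) := by
      rw [hg, norm_mul]
      congr 1
      rw [Complex.norm_cpow_eq_rpow_re_of_pos hQpos, hre]
    rw [hnormg, hb1]
    have h1 : ‖φ x - φ 0‖ ≤ 2*C := le_trans (norm_sub_le _ _) (by linarith [hCb x, hCb 0])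
    have h2 : ‖Qf p a x‖ ^ (-σ) ≤ ((p:ℝ)^(e n)) ^ (-σ) :=
      Real.rpow_le_rpow_of_nonpos (zpow_pos hppos _) hQlow (by linarith)
    exact mul_le_mul h1 h2 (Real.rpow_nonneg (norm_nonneg _) _) (by linarith)
  -- pointwise domination by indicator sum
  have hptwise : ∀ x, (‖g x‖₊ : ℝ≥0∞) ≤
      ∑' n : ℕ, Set.indicator (B (k₀+n+1) \ B (k₀+n)) (fun _ => ENNReal.ofReal (b1 n)) x := by
    intro x
    by_cases hgx : g x = 0
    · simp [hgx]
    · have hne : φ x - φ 0 ≠ 0 := by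
        intro h
        exact hgx (by rw [hg]; simp only []; rw [h, zero_mul])
      have hgt : (p:ℝ)^k₀ < ‖x‖ := by
        by_contra h
        push_neg at h
        exact hne (sub_eq_zero.2 (hsmall x h))
      have hxne : x ≠ 0 := by
        intro h
        rw [h, norm_zero] at hgt
        exact absurd hgt (not_lt.2 (le_of_lt (zpow_pos hppos _)))
      obtain ⟨i₀, hi₀⟩ := PadicAux.exists_norm_eq' x
      have hxi0 : x i₀ ≠ 0 := by
        intro h
        rw [h, norm_zero] at hi₀
        exact (norm_ne_zero_iff.mpr hxne) hi₀.symm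
      set j : ℤ := -(x i₀).valuation with hj0
      have hj : ‖x‖ = (p:ℝ)^j := by rw [← hi₀, Padic.norm_eq_zpow_neg_valuation hxi0]
      have hjk : k₀ < j := by
        rw [hj] at hgt
        exact (zpow_lt_zpow_iff_right₀ hp1).1 hgt
      set n : ℕ := (j - (k₀+1)).toNat with hn
      have hjn : j = k₀ + n + 1 := by rw [hn]; omega
      have hxmem : x ∈ B (k₀+n+1) \ B (k₀+n) := by
        constructor
        · exact Metric.mem_closedBall.2 (by rw [dist_zero_right, hj, hjn])
        · intro hmem
          rw [hB] at hmem
          rw [Metric.mem_closedBall, dist_zero_right, hj, hjn] at hmem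
          have := (zpow_le_zpow_iff_right₀ hp1).1 hmem
          omega
      calc (‖g x‖₊ : ℝ≥0∞) = ENNReal.ofReal ‖g x‖ := (ofReal_norm _).symm
      _ ≤ ENNReal.ofReal (b1 n) := ENNReal.ofReal_le_ofReal (hbound n x hxmem)
      _ = Set.indicator (B (k₀+n+1) \ B (k₀+n)) (fun _ => ENNReal.ofReal (b1 n)) x :=
          (Set.indicator_of_mem hxmem (fun _ => ENNReal.ofReal (b1 n))).symm
      _ ≤ _ := ENNReal.le_tsum n
  have hBmeas : ∀ k : ℤ, MeasurableSet (B k) := fun k => Metric.isClosed_closedBall.measurableSet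
  -- geometric series
  set r : ℝ := (p:ℝ)^(-(2*σ)) * (p:ℝ)^(4:ℕ) with hr
  set K : ℝ := (2*C) * ((p:ℝ)^((2*k₀-1:ℤ)))^(-σ) * (p:ℝ)^(4:ℕ) with hK
  have hrnn : 0 ≤ r := by
    rw [hr]; positivity
  have hrlt : r < 1 := by
    rw [hr]
    have h4 : (p:ℝ)^(4:ℕ) = (p:ℝ)^((4:ℕ):ℝ) := (Real.rpow_natCast _ 4).symm
    rw [h4, ← Real.rpow_add hppos]
    apply Real.rpow_lt_one_of_one_lt_of_neg hp1
    push_cast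
    linarith
  have hgeom : ∀ n : ℕ, b1 n * (p:ℝ)^(4*(n+1)) = K * r^n := by
    intro n
    have hsplit : (p:ℝ)^(e n) = (p:ℝ)^((2*k₀-1:ℤ)) * (p:ℝ)^((2*n:ℤ)) := by
      rw [← zpow_add₀ hpne]
      congr 1
      simp only [he]
      push_cast
      ring
    have h2n : ((p:ℝ)^((2*n:ℤ)))^(-σ) = ((p:ℝ)^(-(2*σ)))^n := by
      rw [← Real.rpow_intCast (p:ℝ) (2*n), ← Real.rpow_natCast ((p:ℝ)^(-(2*σ))) n,
        ← Real.rpow_mul (le_of_lt hppos), ← Real.rpow_mul (le_of_lt hppos)]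
      congr 1
      push_cast
      ring
    have hmul : ((p:ℝ)^(e n))^(-σ)
        = ((p:ℝ)^((2*k₀-1:ℤ)))^(-σ) * ((p:ℝ)^(-(2*σ)))^n := by
      rw [hsplit, Real.mul_rpow (le_of_lt (zpow_pos hppos _)) (le_of_lt (zpow_pos hppos _)), h2n]
    have hpow : (p:ℝ)^(4*(n+1)) = (p:ℝ)^(4:ℕ) * ((p:ℝ)^(4:ℕ))^n := by
      rw [← pow_mul, ← pow_add]
      congr 1
      ring
    simp only [hb1, hK, hr]
    rw [hmul, hpow, mul_pow]
    ring
  have hsummable : Summable (fun n : ℕ => b1 n * (p:ℝ)^(4*(n+1))) := by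
    apply Summable.congr ((summable_geometric_of_lt_one hrnn hrlt).mul_left K)
    intro n
    exact (hgeom n).symm
  have hbnn : ∀ n : ℕ, 0 ≤ b1 n * (p:ℝ)^(4*(n+1)) := fun n => by
    have := hb1nn n; positivity
  -- main estimate
  show (∫⁻ x, ‖g x‖₊ ∂haarQn p 4) < ⊤
  have hchain : (∫⁻ x, ‖g x‖₊ ∂haarQn p 4) ≤
      ∑' n : ℕ, ENNReal.ofReal (b1 n * (p:ℝ)^(4*(n+1))) * M := by
    calc (∫⁻ x, ‖g x‖₊ ∂haarQn p 4)
        ≤ ∫⁻ x, ∑' n : ℕ, Set.indicator (B (k₀+n+1) \ B (k₀+n))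
            (fun _ => ENNReal.ofReal (b1 n)) x ∂haarQn p 4 := lintegral_mono hptwise
    _ = ∑' n : ℕ, ∫⁻ x, Set.indicator (B (k₀+n+1) \ B (k₀+n))
            (fun _ => ENNReal.ofReal (b1 n)) x ∂haarQn p 4 :=
        lintegral_tsum (fun n => (measurable_const.indicator
          ((hBmeas _).diff (hBmeas _))).aemeasurable)
    _ = ∑' n : ℕ, ENNReal.ofReal (b1 n) * haarQn p 4 (B (k₀+n+1) \ B (k₀+n)) := by
        refine tsum_congr (fun n => ?_)
        rw [lintegral_indicator ((hBmeas _).diff (hBmeas _)), setLIntegral_const]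
    _ ≤ ∑' n : ℕ, ENNReal.ofReal (b1 n * (p:ℝ)^(4*(n+1))) * M := by
        refine ENNReal.tsum_le_tsum (fun n => ?_)
        have hball : haarQn p 4 (B (k₀+n+1) \ B (k₀+n)) ≤ (p:ℝ≥0∞)^(4*(n+1)) * M := by
          calc haarQn p 4 (B (k₀+n+1) \ B (k₀+n)) ≤ haarQn p 4 (B (k₀+n+1)) :=
                measure_mono Set.diff_subset
          _ ≤ (p:ℝ≥0∞)^(4*(n+1)) * M := by
                have h := PadicAux.measure_ball_le (p := p) k₀ (n+1)
                have hcast : (k₀ + ((n+1:ℕ):ℤ) : ℤ) = k₀ + n + 1 := by push_cast; ring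
                rw [hcast] at h
                exact h
        have hofr : ((p:ℝ≥0∞)^(4*(n+1)) : ℝ≥0∞) = ENNReal.ofReal ((p:ℝ)^(4*(n+1))) := by
          rw [ENNReal.ofReal_pow (le_of_lt hppos), ENNReal.ofReal_natCast]
        calc ENNReal.ofReal (b1 n) * haarQn p 4 (B (k₀+n+1) \ B (k₀+n))
            ≤ ENNReal.ofReal (b1 n) * ((p:ℝ≥0∞)^(4*(n+1)) * M) := by gcongr
        _ = ENNReal.ofReal (b1 n * (p:ℝ)^(4*(n+1))) * M := by
            rw [← mul_assoc, hofr, ← ENNReal.ofReal_mul (hb1nn n)]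
  refine lt_of_le_of_lt hchain ?_
  rw [ENNReal.tsum_mul_right, ← ENNReal.ofReal_tsum_of_nonneg hbnn hsummable]
  exact ENNReal.mul_lt_top ENNReal.ofReal_lt_top hMfin
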